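/- Let E = g ⊕ W be a vector space with an (alternating, bilinear) bracket such that: g is a simple Lie subalgebra, the bracket of g with W makes W a nontrivial irreducible g-representation, dim g > dim W, [W,W] = g, and the Jacobi identity holds (so E is a Lie algebra). Then E is a simple Lie algebra. -/

import Mathlib

lemma aux_lift {k E : Type*} [Field k] [LieRing E] [LieAlgebra k E]
    (gS : LieSubalgebra k E) (hgsimple : LieAlgebra.IsSimple k ↥gS)
    (J : Submodule k E) (hle : J ≤ gS.toSubmodule)
    (hid : ∀ x ∈ gS, ∀ a ∈ J, ⁅x, a⁆ ∈ J) :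
    J = ⊥ ∨ J = gS.toSubmodule := by
  set J' : LieIdeal k ↥gS :=
    { carrier := {x : ↥gS | (x : E) ∈ J}
      add_mem' := fun ha hb => by simpa using J.add_mem ha hb
      zero_mem' := by simp
      smul_mem' := fun c x hx => by simpa using J.smul_mem c hx
      lie_mem := fun {x m} hm => by
        show ((⁅x, m⁆ : ↥gS) : E) ∈ J
        rw [LieSubalgebra.coe_bracket]
        exact hid _ x.2 _ hm } with hJ'
  rcases hgsimple.eq_bot_or_eq_top J' with h | h
  · left
    ext a
    simp only [Submodule.mem_bot]
    constructor
    · intro ha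
      have : (⟨a, hle ha⟩ : ↥gS) ∈ J' := ha
      rw [h] at this
      exact congrArg Subtype.val ((LieSubmodule.mem_bot _).1 this)
    · rintro rfl; exact J.zero_mem
  · right
    ext a
    constructor
    · intro ha; exact hle ha
    · intro ha
      have : (⟨a, ha⟩ : ↥gS) ∈ J' := by rw [h]; trivial
      exact this

theorem stmt19 {k E : Type*} [Field k] [LieRing E] [LieAlgebra k E]
    [Module.Finite k E]
    -- a subalgebra `g` of `E`, simple as a Lie algebra
    (gS : LieSubalgebra k E)
    (hgsimple : LieAlgebra.IsSimple k ↥gS)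
    -- a complementary `g`-submodule `W`
    (W : Submodule k E)
    (hcompl : IsCompl gS.toSubmodule W)
    (hWmod : ∀ x ∈ gS, ∀ w ∈ W, ⁅x, w⁆ ∈ W)
    -- `W` is an irreducible `g`-representation
    (hirred : ∀ U : Submodule k E, U ≤ W →
      (∀ x ∈ gS, ∀ u ∈ U, ⁅x, u⁆ ∈ U) → U = ⊥ ∨ U = W)
    -- on which `g` acts nontrivially
    (hnontriv : ∃ x ∈ gS, ∃ w ∈ W, ⁅x, w⁆ ≠ 0)
    -- `[W, W] = g`
    (hWW : Submodule.span k {z : E | ∃ u ∈ W, ∃ v ∈ W, z = ⁅u, v⁆} =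
      gS.toSubmodule)
    -- `dim g > dim W`
    (hdim : Module.finrank k ↥W < Module.finrank k ↥gS.toSubmodule) :
    ∀ I : LieIdeal k E, I = ⊥ ∨ I = ⊤ := by
  obtain ⟨x0, hx0, w0, hw0, hne⟩ := hnontriv
  have hx0ne : x0 ≠ 0 := by rintro rfl; exact hne (zero_lie w0)
  set q : Submodule k E := gS.toSubmodule with hq
  set f := Submodule.linearProjOfIsCompl q W hcompl with hf
  set pg : E →ₗ[k] E := q.subtype.comp f with hpg
  have hpg_mem : ∀ x : E, pg x ∈ gS := fun x => (f x).2
  have hpg_g : ∀ a ∈ gS, pg a = a := fun a ha => by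
    have := Submodule.linearProjOfIsCompl_apply_left hcompl ⟨a, ha⟩
    exact congrArg (Subtype.val) this
  have hpg_W : ∀ w ∈ W, pg w = 0 := fun w hw => by
    have := Submodule.linearProjOfIsCompl_apply_right' hcompl hw
    show ((f w : q) : E) = 0
    rw [show f w = 0 from this]; rfl
  have hpw_mem : ∀ x : E, x - pg x ∈ W := fun x => by
    have h1 : pg (x - pg x) = 0 := by
      rw [map_sub, hpg_g (pg x) (hpg_mem x), sub_self]
    have h2 : f (x - pg x) = 0 := by
      have := congrArg Subtype.val (show f (x - pg x) = (0 : q) from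
        Subtype.ext (by simpa [hpg] using h1))
      exact Subtype.ext (by simpa [hpg] using h1)
    exact (Submodule.linearProjOfIsCompl_apply_eq_zero_iff hcompl).1 h2
  have hbr : ∀ x ∈ gS, ∀ y : E, pg ⁅x, y⁆ = ⁅x, pg y⁆ := by
    intro x hx y
    have hdec : ⁅x, y⁆ = ⁅x, pg y⁆ + ⁅x, y - pg y⁆ := by
      rw [← lie_add, add_sub_cancel]
    rw [hdec, map_add, hpg_g _ (gS.lie_mem hx (hpg_mem y)),
      hpg_W _ (hWmod x hx _ (hpw_mem y)), add_zero]
  intro I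
  by_cases hI : I = ⊥
  · left; exact hI
  right
  rw [← LieSubmodule.toSubmodule_eq_top]
  have hImem : ∀ z : E, z ∈ (I : Submodule k E) ↔ z ∈ I := fun z => Iff.rfl
  have hIlie : ∀ x : E, ∀ i ∈ (I : Submodule k E), ⁅x, i⁆ ∈ (I : Submodule k E) :=
    fun x i hi => I.lie_mem hi
  have hIlie' : ∀ i ∈ (I : Submodule k E), ∀ y : E, ⁅i, y⁆ ∈ (I : Submodule k E) := by
    intro i hi y
    rw [← lie_skew]
    exact Submodule.neg_mem _ (hIlie y i hi)
  -- the projection of I to W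
  set IW : Submodule k E := (I : Submodule k E).map (LinearMap.id - pg) with hIW
  have hIWmem : ∀ i ∈ (I : Submodule k E), i - pg i ∈ IW := by
    intro i hi
    exact ⟨i, hi, by simp⟩
  have hIW_le : IW ≤ W := by
    rintro _ ⟨i, hi, rfl⟩
    simpa using hpw_mem i
  have hIW_mod : ∀ x ∈ gS, ∀ u ∈ IW, ⁅x, u⁆ ∈ IW := by
    rintro x hx _ ⟨i, hi, rfl⟩
    have : ⁅x, (LinearMap.id - pg : E →ₗ[k] E) i⁆ = (LinearMap.id - pg : E →ₗ[k] E) ⁅x, i⁆ := by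
      simp only [LinearMap.sub_apply, LinearMap.id_apply]
      rw [lie_sub, hbr x hx i]
    rw [this]
    exact ⟨⁅x, i⁆, hIlie x i hi, rfl⟩
  have hqbot : q ≠ ⊥ := by
    intro h
    exact hx0ne (by simpa [h] using (show x0 ∈ q from hx0))
  rcases hirred IW hIW_le hIW_mod with hIWbot | hIWW
  · -- I ⊆ g
    have hIle : (I : Submodule k E) ≤ q := by
      intro i hi
      have h0 : i - pg i = 0 := by
        have := hIWmem i hi
        rw [hIWbot] at this
        simpa using this
      have : i = pg i := by linear_combination (norm := abel) h0
      rw [this]; exact hpg_mem i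
    rcases aux_lift gS hgsimple (I : Submodule k E) hIle
        (fun x _ a ha => hIlie x a ha) with h | h
    · exact absurd ((LieSubmodule.toSubmodule_eq_bot I).1 h) hI
    · exfalso
      have hx0I : x0 ∈ (I : Submodule k E) := by rw [h]; exact hx0
      have h1 : ⁅x0, w0⁆ ∈ (I : Submodule k E) := hIlie' x0 hx0I w0
      have h2 : ⁅x0, w0⁆ ∈ W := hWmod x0 hx0 w0 hw0
      have h3 : ⁅x0, w0⁆ ∈ q ⊓ W :=
        ⟨by show ⁅x0, w0⁆ ∈ gS.toSubmodule; rw [← h]; exact h1, h2⟩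
      rw [hcompl.inf_eq_bot] at h3
      exact hne (by simpa using h3)
  · -- projection of I to W is all of W
    -- I ∩ g is an ideal of g
    rcases aux_lift gS hgsimple (q ⊓ (I : Submodule k E))
        (fun a ha => ha.1)
        (fun x hx a ha => ⟨gS.lie_mem hx ha.1, hIlie x a ha.2⟩) with hinf | hinf
    · -- I ∩ g = 0 : consider projection of I to g
      set Ig : Submodule k E := (I : Submodule k E).map pg with hIg
      rcases aux_lift gS hgsimple Ig
          (by rintro _ ⟨i, hi, rfl⟩; exact hpg_mem i)
          (by rintro x hx _ ⟨i, hi, rfl⟩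
              exact ⟨⁅x, i⁆, hIlie x i hi, hbr x hx i⟩) with hIgb | hIgq
      · -- I ⊆ W, so I = W, so g = [W,W] ⊆ I ⊆ W, contradiction
        exfalso
        have hpg0 : ∀ i ∈ (I : Submodule k E), pg i = 0 := by
          intro i hi
          have : pg i ∈ Ig := ⟨i, hi, rfl⟩
          rw [hIgb] at this; simpa using this
        have hWI : W ≤ (I : Submodule k E) := by
          intro w hw
          rw [← hIWW] at hw
          obtain ⟨i, hi, rfl⟩ := hw
          simpa [hpg0 i hi] using hi
        have hqI : q ≤ (I : Submodule k E) := by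
          rw [← hWW, Submodule.span_le]
          rintro _ ⟨u, hu, v, hv, rfl⟩
          exact hIlie' u (hWI hu) v
        have hIleW : (I : Submodule k E) ≤ W := by
          intro i hi
          have : i - pg i ∈ W := hpw_mem i
          rwa [hpg0 i hi, sub_zero] at this
        have : q = ⊥ := by
          rw [← hcompl.inf_eq_bot]
          exact le_antisymm (fun a ha => ⟨ha, hIleW (hqI ha)⟩) inf_le_left
        exact hqbot this
      · -- dimension contradiction
        exfalso
        set φ : ↥(I : Submodule k E) →ₗ[k] E := pg.comp (I : Submodule k E).subtype with hφ
        set ψ : ↥(I : Submodule k E) →ₗ[k] E :=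
          (LinearMap.id - pg).comp (I : Submodule k E).subtype with hψ
        have hφr : LinearMap.range φ = q := by
          rw [hφ, LinearMap.range_comp, Submodule.range_subtype, ← hIg, hIgq]
        have hψinj : Function.Injective ψ := by
          rw [← LinearMap.ker_eq_bot]
          rw [Submodule.eq_bot_iff]
          rintro i hik
          have h0 : (i : E) - pg (i : E) = 0 := LinearMap.mem_ker.1 hik
          have hiq : (i : E) ∈ q := by
            have : (i : E) = pg (i : E) := by linear_combination (norm := abel) h0
            rw [this]; exact hpg_mem _
          have : (i : E) ∈ q ⊓ (I : Submodule k E) := ⟨hiq, i.2⟩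
          rw [hinf] at this
          exact Subtype.ext (by simpa using this)
        have hψr : LinearMap.range ψ ≤ W := by
          rintro _ ⟨i, rfl⟩
          exact hpw_mem (i : E)
        have h1 : Module.finrank k ↥q ≤ Module.finrank k ↥(I : Submodule k E) := by
          rw [← hφr]; exact LinearMap.finrank_range_le φ
        have h2 : Module.finrank k ↥(I : Submodule k E)
            = Module.finrank k ↥(LinearMap.range ψ) :=
          (LinearMap.finrank_range_of_inj hψinj).symm
        have h3 : Module.finrank k ↥(LinearMap.range ψ) ≤ Module.finrank k ↥W :=
          Submodule.finrank_mono hψr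
        omega
    · -- g ⊆ I
      have hqI : q ≤ (I : Submodule k E) := by
        intro a ha
        have : a ∈ q ⊓ (I : Submodule k E) := by rw [hinf]; exact ha
        exact this.2
      set U : Submodule k E :=
        Submodule.span k {z : E | ∃ x ∈ gS, ∃ w ∈ W, z = ⁅x, w⁆} with hU
      have hUle : U ≤ W := by
        rw [hU, Submodule.span_le]
        rintro _ ⟨x, hx, w, hw, rfl⟩
        exact hWmod x hx w hw
      have hUmod : ∀ x ∈ gS, ∀ u ∈ U, ⁅x, u⁆ ∈ U := by
        intro x hx u hu
        induction hu using Submodule.span_induction with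
        | mem z hz =>
          obtain ⟨y, hy, w, hw, rfl⟩ := hz
          have : ⁅x, ⁅y, w⁆⁆ = ⁅⁅x, y⁆, w⁆ + ⁅y, ⁅x, w⁆⁆ := by
            rw [lie_lie]; abel
          rw [this]
          exact Submodule.add_mem _
            (Submodule.subset_span ⟨⁅x, y⁆, gS.lie_mem hx hy, w, hw, rfl⟩)
            (Submodule.subset_span ⟨y, hy, ⁅x, w⁆, hWmod x hx w hw, rfl⟩)
        | zero => simpa using U.zero_mem
        | add a b _ _ ha hb => rw [lie_add]; exact U.add_mem ha hb
        | smul c a _ ha => rw [lie_smul]; exact U.smul_mem c ha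
      have hUne : U ≠ ⊥ := by
        intro h
        have : ⁅x0, w0⁆ ∈ U := Submodule.subset_span ⟨x0, hx0, w0, hw0, rfl⟩
        rw [h] at this
        exact hne (by simpa using this)
      have hUW : U = W := (hirred U hUle hUmod).resolve_left hUne
      have hWI : W ≤ (I : Submodule k E) := by
        rw [← hUW, hU, Submodule.span_le]
        rintro _ ⟨x, hx, w, hw, rfl⟩
        exact hIlie' x (hqI hx) w
      have hsup : q ⊔ W ≤ (I : Submodule k E) := sup_le hqI hWI
      rw [hcompl.codisjoint.eq_top] at hsup
      exact top_unique hsup
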